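/- Let M be a pointed metric space and let Q : ℓ¹(M̃) → F(M) be the bounded linear map sending the standard basis vector e_{(x,y)} to the molecule m_{xy} = (δ(x) - δ(y))/d(x,y), where M̃ = {(x,y) ∈ M × M : x ≠ y}. Then Q is a quotient map: ‖Q‖ = 1 and Q maps the open unit ball of ℓ¹(M̃) onto the open unit ball of F(M). -/

import Mathlib

noncomputable section

open Metric Set

/-- The space of real-valued Lipschitz functions on `M` vanishing at `base`. -/
structure Lip0 (M : Type*) [MetricSpace M] (base : M) where
  toFun : M → ℝ
  exists_lip' : ∃ K, LipschitzWith K toFun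
  map_base' : toFun base = 0

namespace Lip0

variable {M : Type*} [MetricSpace M] {base : M}

instance : FunLike (Lip0 M base) M ℝ where
  coe := toFun
  coe_injective := by rintro ⟨f, _, _⟩ ⟨g, _, _⟩ h; simpa using h

@[simp] lemma map_base (f : Lip0 M base) : f base = 0 := f.map_base'

/-- The set of (nonnegative real) Lipschitz constants of `f`. -/
def lipSet (f : Lip0 M base) : Set ℝ :=
  {K | 0 ≤ K ∧ ∀ x y, |f x - f y| ≤ K * dist x y}

lemma lipSet_nonempty (f : Lip0 M base) : (lipSet f).Nonempty := by
  obtain ⟨K, hK⟩ := f.exists_lip'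
  exact ⟨K, K.coe_nonneg, fun x y => by
    have h := hK.dist_le_mul x y
    exact h⟩

lemma lipSet_bddBelow (f : Lip0 M base) : BddBelow (lipSet f) :=
  ⟨0, fun K hK => hK.1⟩

lemma sInf_mem_lipSet (f : Lip0 M base) : sInf (lipSet f) ∈ lipSet f := by
  constructor
  · exact le_csInf (lipSet_nonempty f) fun K hK => hK.1
  · intro x y
    rcases eq_or_ne x y with rfl | hxy
    · simp
    · have hd : 0 < dist x y := dist_pos.2 hxy
      rw [← div_le_iff₀ hd]
      exact le_csInf (lipSet_nonempty f) fun K hK => (div_le_iff₀ hd).2 (hK.2 x y)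

instance : Zero (Lip0 M base) :=
  ⟨⟨fun _ => 0, ⟨0, LipschitzWith.const 0⟩, rfl⟩⟩

instance : Add (Lip0 M base) :=
  ⟨fun f g => ⟨fun t => f t + g t, by
    obtain ⟨Kf, hf⟩ := f.exists_lip'; obtain ⟨Kg, hg⟩ := g.exists_lip'
    exact ⟨Kf + Kg, hf.add hg⟩, by simp⟩⟩

instance : Neg (Lip0 M base) :=
  ⟨fun f => ⟨fun t => -f t, by
    obtain ⟨Kf, hf⟩ := f.exists_lip'
    exact ⟨Kf, hf.neg⟩, by simp⟩⟩

def rsmul (c : ℝ) (f : Lip0 M base) : Lip0 M base :=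
  ⟨fun t => c * f t, by
    obtain ⟨Kf, hf⟩ := f.exists_lip'
    refine ⟨⟨|c|, abs_nonneg c⟩ * Kf, LipschitzWith.of_dist_le_mul fun x y => ?_⟩
    have h1 : dist (c * f x) (c * f y) = |c| * |f x - f y| := by
      rw [Real.dist_eq, ← abs_mul, mul_sub]
    have h2 := hf.dist_le_mul x y
    rw [Real.dist_eq] at h2
    rw [h1]
    calc |c| * |f x - f y| ≤ |c| * (Kf * dist x y) :=
          mul_le_mul_of_nonneg_left h2 (abs_nonneg c)
      _ = (⟨|c|, abs_nonneg c⟩ * Kf : NNReal) * dist x y := by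
          show _ = (|c| * (Kf : ℝ)) * dist x y; ring, by simp⟩

instance : SMul ℝ (Lip0 M base) := ⟨rsmul⟩
instance : SMul ℕ (Lip0 M base) := ⟨fun n => rsmul (n : ℝ)⟩
instance : SMul ℤ (Lip0 M base) := ⟨fun n => rsmul (n : ℝ)⟩
instance : Sub (Lip0 M base) := ⟨fun f g => f + -g⟩

@[simp] lemma coe_zero : ⇑(0 : Lip0 M base) = fun _ => 0 := rfl
@[simp] lemma coe_add (f g : Lip0 M base) : ⇑(f + g) = fun t => f t + g t := rfl
@[simp] lemma coe_neg (f : Lip0 M base) : ⇑(-f) = fun t => -f t := rfl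
@[simp] lemma coe_smul (c : ℝ) (f : Lip0 M base) : ⇑(c • f) = fun t => c * f t := rfl
@[simp] lemma coe_sub (f g : Lip0 M base) : ⇑(f - g) = fun t => f t - g t := by
  show (fun t => f t + -(g t)) = _
  funext t; ring

instance : AddCommGroup (Lip0 M base) :=
  (DFunLike.coe_injective (F := Lip0 M base)).addCommGroup _
    rfl (fun _ _ => rfl) (fun _ => rfl) (fun f g => coe_sub f g)
    (fun f n => by funext t; show (n : ℝ) * f t = n • f t; simp)
    (fun f n => by funext t; show (n : ℝ) * f t = n • f t; simp)

instance : Module ℝ (Lip0 M base) :=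
  (DFunLike.coe_injective (F := Lip0 M base)).module ℝ
    { toFun := fun f : Lip0 M base => ⇑f, map_zero' := rfl, map_add' := fun _ _ => rfl }
    (fun _ _ => rfl)

lemma lipSet_neg (f : Lip0 M base) : lipSet (-f) = lipSet f := by
  unfold lipSet
  ext K
  have e : ∀ x y : M, (-f) x - (-f) y = -(f x - f y) := fun x y => by
    show -f x - -f y = -(f x - f y); ring
  constructor <;> rintro ⟨h0, h⟩ <;> refine ⟨h0, fun x y => ?_⟩
  · have := h x y; rwa [e, abs_neg] at this
  · rw [e, abs_neg]; exact h x y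

instance : NormedAddCommGroup (Lip0 M base) :=
  AddGroupNorm.toNormedAddCommGroup
  { toFun := fun f => sInf (lipSet f)
    map_zero' := by
      apply le_antisymm
      · exact csInf_le (lipSet_bddBelow _) ⟨le_refl 0, fun x y => by simp⟩
      · exact (sInf_mem_lipSet (0 : Lip0 M base)).1
    add_le' := fun f g => by
      apply csInf_le (lipSet_bddBelow _)
      refine ⟨add_nonneg (sInf_mem_lipSet f).1 (sInf_mem_lipSet g).1, fun x y => ?_⟩
      have hf := (sInf_mem_lipSet f).2 x y
      have hg := (sInf_mem_lipSet g).2 x y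
      calc |(f + g) x - (f + g) y| = |(f x - f y) + (g x - g y)| := by
            simp [coe_add]; ring_nf
        _ ≤ |f x - f y| + |g x - g y| := abs_add_le _ _
        _ ≤ sInf (lipSet f) * dist x y + sInf (lipSet g) * dist x y := add_le_add hf hg
        _ = (sInf (lipSet f) + sInf (lipSet g)) * dist x y := by ring
    neg' := fun f => by show sInf (lipSet (-f)) = sInf (lipSet f); rw [lipSet_neg]
    eq_zero_of_map_eq_zero' := fun f hf => by
      have hf' : sInf (lipSet f) = 0 := hf
      apply DFunLike.coe_injective
      funext t
      have h := (sInf_mem_lipSet f).2 t base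
      rw [hf', zero_mul] at h
      have h0 : f t - f base = 0 := abs_nonpos_iff.1 h
      show f t = (0 : Lip0 M base) t
      have : (0 : Lip0 M base) t = 0 := rfl
      rw [this]
      simpa using h0 }

lemma norm_def (f : Lip0 M base) : ‖f‖ = sInf (lipSet f) := rfl

instance : NormedSpace ℝ (Lip0 M base) where
  norm_smul_le c f := by
    rw [norm_def, norm_def, Real.norm_eq_abs]
    apply csInf_le (lipSet_bddBelow _)
    refine ⟨mul_nonneg (abs_nonneg c) (sInf_mem_lipSet f).1, fun x y => ?_⟩
    have hf := (sInf_mem_lipSet f).2 x y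
    calc |(c • f) x - (c • f) y| = |c| * |f x - f y| := by
          rw [coe_smul]; rw [← abs_mul]; ring_nf
      _ ≤ |c| * (sInf (lipSet f) * dist x y) :=
          mul_le_mul_of_nonneg_left hf (abs_nonneg c)
      _ = |c| * sInf (lipSet f) * dist x y := by ring

lemma norm_apply_le (f : Lip0 M base) (x y : M) : |f x - f y| ≤ ‖f‖ * dist x y :=
  (sInf_mem_lipSet f).2 x y

end Lip0

open Lip0 NormedSpace

variable (M : Type*) [MetricSpace M]

/-- The Dirac evaluation functional at `x`. -/
def deltaF (base x : M) : StrongDual ℝ (Lip0 M base) :=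
  LinearMap.mkContinuous
    { toFun := fun f => f x
      map_add' := fun _ _ => rfl
      map_smul' := fun _ _ => rfl }
    (dist x base)
    (fun f => by
      have h := Lip0.norm_apply_le f x base
      simp only [Lip0.map_base, sub_zero] at h
      show |f x| ≤ dist x base * ‖f‖
      rw [mul_comm]; exact h)

variable {M}

@[simp] lemma deltaF_apply (base x : M) (f : Lip0 M base) : deltaF M base x f = f x := rfl

/-- The molecule `(δ x - δ y)/d(x,y)`. -/
def molecule (base x y : M) : StrongDual ℝ (Lip0 M base) :=
  (dist x y)⁻¹ • (deltaF M base x - deltaF M base y)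

variable (M) in
/-- The Lipschitz-free space over `M`, realized as the closed linear span of the Dirac
evaluations inside the dual of `Lip0 M base`. -/
def FreeSpace (base : M) : Submodule ℝ (StrongDual ℝ (Lip0 M base)) :=
  (Submodule.span ℝ (Set.range (deltaF M base))).topologicalClosure

/-- Port helper: the (unchanged) submodule norm on `FreeSpace M base`, registered directly so that
instance search finds the operator norm on maps into it. -/
instance FreeSpace.instSeminormedAddCommGroup (base : M) :
    SeminormedAddCommGroup ↥(FreeSpace M base) :=
  Submodule.seminormedAddCommGroup _

/-- Port helper: the (unchanged) submodule normed-space structure on `FreeSpace M base`. -/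
instance FreeSpace.instNormedSpace (base : M) : NormedSpace ℝ ↥(FreeSpace M base) :=
  Submodule.normedSpace _

variable (M) in
/-- The subspace of the free space generated by the Diracs of a subset `S ⊆ M`. -/
def FreeSpaceOn (base : M) (S : Set M) : Submodule ℝ (StrongDual ℝ (Lip0 M base)) :=
  (Submodule.span ℝ (deltaF M base '' S)).topologicalClosure

lemma deltaF_mem (base x : M) : deltaF M base x ∈ FreeSpace M base :=
  Submodule.le_topologicalClosure _ (Submodule.subset_span ⟨x, rfl⟩)

lemma molecule_mem (base x y : M) : molecule base x y ∈ FreeSpace M base :=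
  Submodule.smul_mem _ _ (Submodule.sub_mem _ (deltaF_mem base x) (deltaF_mem base y))

/-- The molecule as an element of the free space. -/
def mol (base x y : M) : ↥(FreeSpace M base) := ⟨molecule base x y, molecule_mem base x y⟩

/-- The "magic function" of Ivakhno, Kadets and Werner associated to the pair `(p, q)`,
with base point `o`. -/
def magicFun (o p q : M) (t : M) : ℝ :=
  (dist p q / 2) *
    ((dist t q - dist t p) / (dist t q + dist t p) -
      (dist o q - dist o p) / (dist o q + dist o p))

/-! ### Auxiliary lemmas for `stmt_5` -/

section Aux

variable {M : Type*} [MetricSpace M] {base : M}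

lemma molecule_apply (x y : M) (g : Lip0 M base) :
    molecule base x y g = (dist x y)⁻¹ * (g x - g y) := by
  simp [molecule, ContinuousLinearMap.smul_apply, smul_eq_mul]

lemma molecule_norm_le (x y : M) : ‖molecule base x y‖ ≤ 1 := by
  refine ContinuousLinearMap.opNorm_le_bound _ zero_le_one fun g => ?_
  rw [molecule_apply, Real.norm_eq_abs, abs_mul, abs_inv, abs_dist]
  have h := Lip0.norm_apply_le g x y
  calc (dist x y)⁻¹ * |g x - g y| ≤ (dist x y)⁻¹ * (‖g‖ * dist x y) := by
        exact mul_le_mul_of_nonneg_left h (inv_nonneg.2 dist_nonneg)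
    _ = ‖g‖ * ((dist x y)⁻¹ * dist x y) := by ring
    _ ≤ ‖g‖ * 1 := by
        refine mul_le_mul_of_nonneg_left ?_ (norm_nonneg g)
        rcases eq_or_ne (dist x y) 0 with h0 | h0
        · simp [h0]
        · rw [inv_mul_cancel₀ h0]
    _ = 1 * ‖g‖ := by ring

/-- The witness function `t ↦ d(t,y) - d(base,y)` as an element of `Lip0`. -/
def distWitness (base y : M) : Lip0 M base :=
  ⟨fun t => dist t y - dist base y,
    ⟨1, LipschitzWith.of_dist_le_mul fun a b => by
      rw [Real.dist_eq]
      have : (dist a y - dist base y) - (dist b y - dist base y) = dist a y - dist b y := by ring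
      rw [this, NNReal.coe_one, one_mul]
      exact abs_dist_sub_le a b y⟩,
    by simp⟩

lemma distWitness_apply (y t : M) : (distWitness base y) t = dist t y - dist base y := rfl

lemma distWitness_norm_le (y : M) : ‖distWitness base y‖ ≤ 1 := by
  rw [Lip0.norm_def]
  refine csInf_le (Lip0.lipSet_bddBelow _) ⟨zero_le_one, fun a b => ?_⟩
  have : (distWitness base y) a - (distWitness base y) b = dist a y - dist b y := by
    simp only [distWitness_apply]; ring
  rw [this, one_mul]
  exact abs_dist_sub_le a b y

lemma molecule_norm_eq_one {x y : M} (h : x ≠ y) : ‖molecule base x y‖ = 1 := by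
  refine le_antisymm (molecule_norm_le x y) ?_
  have hd : (0:ℝ) < dist x y := dist_pos.2 h
  have hval : molecule base x y (distWitness base y) = 1 := by
    rw [molecule_apply]
    have h1 : (distWitness base y) x - (distWitness base y) y = dist x y := by
      simp [distWitness_apply]
    rw [h1, inv_mul_cancel₀ hd.ne']
  have h1 : (1:ℝ) ≤ ‖molecule base x y‖ * ‖distWitness base y‖ := by
    calc (1:ℝ) = ‖molecule base x y (distWitness base y)‖ := by rw [hval]; simp
      _ ≤ ‖molecule base x y‖ * ‖distWitness base y‖ :=
        ContinuousLinearMap.le_opNorm _ _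
  calc (1:ℝ) ≤ ‖molecule base x y‖ * ‖distWitness base y‖ := h1
    _ ≤ ‖molecule base x y‖ * 1 :=
        mul_le_mul_of_nonneg_left (distWitness_norm_le y) (norm_nonneg _)
    _ = ‖molecule base x y‖ := mul_one _

lemma mol_norm_le (x y : M) : ‖mol base x y‖ ≤ 1 := molecule_norm_le x y

lemma molecule_neg (x y : M) : molecule base y x = -molecule base x y := by
  unfold molecule
  rw [dist_comm y x, ← neg_sub, smul_neg]

instance freeSpace_complete : CompleteSpace (FreeSpace M base) :=
  (Submodule.isClosed_topologicalClosure _).completeSpace_coe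

end Aux

section QConstruction

open scoped Classical

variable {M : Type*} [MetricSpace M] (base : M)

/-- Index set of pairs of distinct points. -/
abbrev PairIdx (M : Type*) := {pq : M × M // pq.1 ≠ pq.2}

lemma smul_mol_norm_le (base : M) (c : ℝ) (x y : M) : ‖c • mol base x y‖ ≤ ‖c‖ := by
  have h : ‖c • mol base x y‖ = ‖c‖ * ‖mol base x y‖ := norm_smul c (mol base x y)
  rw [h]
  calc ‖c‖ * ‖mol base x y‖ ≤ ‖c‖ * 1 :=
        mul_le_mul_of_nonneg_left (mol_norm_le x y) (norm_nonneg _)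
    _ = ‖c‖ := mul_one _

lemma lp_one_norm_eq (a : lp (fun _ : PairIdx M => ℝ) 1) : ‖a‖ = ∑' i, ‖a i‖ := by
  rw [lp.norm_eq_tsum_rpow (by norm_num) a]
  simp

lemma lp_one_summable (a : lp (fun _ : PairIdx M => ℝ) 1) : Summable fun i => ‖a i‖ := by
  have := (lp.memℓp a).summable (p := 1) (by norm_num)
  simpa using this

lemma Q_summand_summable (a : lp (fun _ : PairIdx M => ℝ) 1) :
    Summable (fun i : PairIdx M => a i • mol base i.1.1 i.1.2) := by
  exact Summable.of_norm (Summable.of_nonneg_of_le (fun i => norm_nonneg _)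
    (fun i => smul_mol_norm_le base _ _ _) (lp_one_summable a))

lemma Q_tsum_norm_le (a : lp (fun _ : PairIdx M => ℝ) 1) :
    ‖∑' i : PairIdx M, a i • mol base i.1.1 i.1.2‖ ≤ ‖a‖ := by
  have hs : Summable (fun i : PairIdx M => ‖a i • mol base i.1.1 i.1.2‖) :=
    Summable.of_nonneg_of_le (fun i => norm_nonneg _)
      (fun i => smul_mol_norm_le base _ _ _) (lp_one_summable a)
  calc ‖∑' i : PairIdx M, a i • mol base i.1.1 i.1.2‖
      ≤ ∑' i : PairIdx M, ‖a i • mol base i.1.1 i.1.2‖ := norm_tsum_le_tsum_norm hs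
    _ ≤ ∑' i : PairIdx M, ‖a i‖ :=
        Summable.tsum_le_tsum (fun i => smul_mol_norm_le base _ _ _) hs (lp_one_summable a)
    _ = ‖a‖ := (lp_one_norm_eq a).symm

/-- The canonical map `ℓ¹(M̃) → F(M)`. -/
def Qmap : lp (fun _ : PairIdx M => ℝ) 1 →L[ℝ] ↥(FreeSpace M base) :=
  LinearMap.mkContinuous
    { toFun := fun a => ∑' i : PairIdx M, a i • mol base i.1.1 i.1.2
      map_add' := fun a b => by
        have : ∀ i : PairIdx M, (a + b) i • mol base i.1.1 i.1.2 =
            a i • mol base i.1.1 i.1.2 + b i • mol base i.1.1 i.1.2 := by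
          intro i
          rw [lp.coeFn_add, Pi.add_apply, add_smul]
        simp_rw [this]
        exact Summable.tsum_add (Q_summand_summable base a) (Q_summand_summable base b)
      map_smul' := fun c a => by
        have : ∀ i : PairIdx M, (c • a) i • mol base i.1.1 i.1.2 =
            c • (a i • mol base i.1.1 i.1.2) := by
          intro i
          rw [lp.coeFn_smul, Pi.smul_apply, smul_smul, smul_eq_mul]
        simp_rw [this]
        exact Summable.tsum_const_smul c (Q_summand_summable base a) }
    1 (fun a => by simpa using Q_tsum_norm_le base a)

lemma Qmap_apply (a : lp (fun _ : PairIdx M => ℝ) 1) :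
    Qmap base a = ∑' i : PairIdx M, a i • mol base i.1.1 i.1.2 := rfl

lemma Qmap_norm_le (a : lp (fun _ : PairIdx M => ℝ) 1) : ‖Qmap base a‖ ≤ ‖a‖ :=
  Q_tsum_norm_le base a

lemma Qmap_single (pq : PairIdx M) :
    Qmap base (lp.single 1 pq 1) = mol base pq.1.1 pq.1.2 := by
  rw [Qmap_apply]
  rw [tsum_eq_single pq ?_]
  · rw [lp.single_apply_self, one_smul]
  · intro i hi
    rw [lp.single_apply_ne 1 pq 1 hi, zero_smul]

lemma lp_single_norm (pq : PairIdx M) : ‖lp.single (E := fun _ : PairIdx M => ℝ) 1 pq (1:ℝ)‖ = 1 := by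
  have := lp.norm_single (E := fun _ : PairIdx M => ℝ) (p := 1) (by norm_num)
    pq (1:ℝ)
  simpa using this

set_option maxHeartbeats 1600000 in
/-- Density of the image of the closed unit ball: the separation argument. -/
lemma dense_image_ball (ν : ↥(FreeSpace M base)) (hν : ‖ν‖ ≤ 1) :
    ν ∈ closure (Qmap base '' Metric.closedBall 0 1) := by
  by_contra hnot
  set K := closure (Qmap base '' Metric.closedBall 0 1) with hK
  have hKconv : Convex ℝ K := by
    refine Convex.closure ?_
    exact (convex_closedBall (0 : lp (fun _ : PairIdx M => ℝ) 1) 1).linear_image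
      (Qmap base).toLinearMap
  have hKclosed : IsClosed K := isClosed_closure
  obtain ⟨φ, u, hφK, hφν⟩ := geometric_hahn_banach_closed_point hKconv hKclosed hnot
  have h0K : (0 : ↥(FreeSpace M base)) ∈ K := by
    refine subset_closure ⟨0, ?_, map_zero _⟩
    simp
  have hu : 0 < u := by simpa using hφK 0 h0K
  have hmolK : ∀ x y : M, x ≠ y →
      (⟨molecule base x y, molecule_mem base x y⟩ : ↥(FreeSpace M base)) ∈ K := by
    intro x y hxy
    refine subset_closure ⟨lp.single 1 ⟨(x, y), hxy⟩ 1, ?_, ?_⟩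
    · simp [Metric.mem_closedBall, lp_single_norm]
    · have := Qmap_single base ⟨(x, y), hxy⟩
      exact this
  -- Build the Lipschitz function from φ
  have hlip : ∀ x y : M, |φ ⟨deltaF M base x, deltaF_mem base x⟩ -
      φ ⟨deltaF M base y, deltaF_mem base y⟩| ≤ u * dist x y := by
    intro x y
    rcases eq_or_ne x y with rfl | hxy
    · simp [mul_nonneg hu.le dist_nonneg]
    · have hd : (0:ℝ) < dist x y := dist_pos.2 hxy
      have hdiff : (⟨deltaF M base x, deltaF_mem base x⟩ : ↥(FreeSpace M base)) -
          ⟨deltaF M base y, deltaF_mem base y⟩ =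
          dist x y • ⟨molecule base x y, molecule_mem base x y⟩ := by
        apply Subtype.ext
        show deltaF M base x - deltaF M base y = dist x y • molecule base x y
        rw [molecule, smul_smul, mul_inv_cancel₀ hd.ne', one_smul]
      have h1 : φ ⟨molecule base x y, molecule_mem base x y⟩ < u := hφK _ (hmolK x y hxy)
      have h2 : -φ ⟨molecule base x y, molecule_mem base x y⟩ < u := by
        have := hφK _ (hmolK y x (Ne.symm hxy))
        have hneg : (⟨molecule base y x, molecule_mem base y x⟩ : ↥(FreeSpace M base)) =
            -⟨molecule base x y, molecule_mem base x y⟩ := by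
          apply Subtype.ext
          show molecule base y x = -molecule base x y
          exact molecule_neg x y
        rw [hneg, map_neg] at this
        exact this
      have habs : |φ ⟨molecule base x y, molecule_mem base x y⟩| ≤ u :=
        abs_le.2 ⟨by linarith, h1.le⟩
      calc |φ ⟨deltaF M base x, deltaF_mem base x⟩ - φ ⟨deltaF M base y, deltaF_mem base y⟩|
          = |φ (⟨deltaF M base x, deltaF_mem base x⟩ - ⟨deltaF M base y, deltaF_mem base y⟩)| := by
            rw [map_sub]
        _ = |dist x y * φ ⟨molecule base x y, molecule_mem base x y⟩| := by
            rw [hdiff, map_smul, smul_eq_mul]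
        _ = dist x y * |φ ⟨molecule base x y, molecule_mem base x y⟩| := by
            rw [abs_mul, abs_dist]
        _ ≤ dist x y * u := mul_le_mul_of_nonneg_left habs dist_nonneg
        _ = u * dist x y := mul_comm _ _
  have hdelta_base : (⟨deltaF M base base, deltaF_mem base base⟩ : ↥(FreeSpace M base)) = 0 := by
    apply Subtype.ext
    show deltaF M base base = 0
    ext g
    simp
  set f : Lip0 M base :=
    ⟨fun x => φ ⟨deltaF M base x, deltaF_mem base x⟩,
      ⟨⟨u, hu.le⟩, LipschitzWith.of_dist_le_mul fun x y => by
        rw [Real.dist_eq]; exact_mod_cast hlip x y⟩,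
      by show φ ⟨deltaF M base base, deltaF_mem base base⟩ = 0
         rw [hdelta_base]; exact map_zero φ⟩ with hf
  have hfnorm : ‖f‖ ≤ u := by
    rw [Lip0.norm_def]
    exact csInf_le (Lip0.lipSet_bddBelow _) ⟨hu.le, fun x y => hlip x y⟩
  -- Agreement of φ with evaluation at f
  set ψ : ↥(FreeSpace M base) →L[ℝ] ℝ :=
    (ContinuousLinearMap.apply ℝ ℝ f).comp (FreeSpace M base).subtypeL with hψ
  have hψ_apply : ∀ μ : ↥(FreeSpace M base), ψ μ = (μ : StrongDual ℝ (Lip0 M base)) f :=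
    fun μ => rfl
  have hagree : ∀ μ : ↥(FreeSpace M base), φ μ = ψ μ := by
    intro μ
    have hclosed : IsClosed {x : ↥(FreeSpace M base) | φ x = ψ x} :=
      isClosed_eq φ.continuous ψ.continuous
    have hspan : ∀ x ∈ Submodule.span ℝ (Set.range (deltaF M base)),
        ∀ h : x ∈ FreeSpace M base, φ ⟨x, h⟩ = ψ ⟨x, h⟩ := by
      intro x hx
      refine Submodule.span_induction (p := fun x _ =>
        ∀ h : x ∈ FreeSpace M base, φ ⟨x, h⟩ = ψ ⟨x, h⟩) ?_ ?_ ?_ ?_ hx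
      · rintro _ ⟨z, rfl⟩ h
        rw [hψ_apply]
        rfl
      · intro h
        have : (⟨0, h⟩ : ↥(FreeSpace M base)) = 0 := Subtype.ext rfl
        rw [this, map_zero, map_zero]
      · intro p q hp hq ihp ihq h
        have hp' : p ∈ FreeSpace M base :=
          Submodule.le_topologicalClosure _ hp
        have hq' : q ∈ FreeSpace M base :=
          Submodule.le_topologicalClosure _ hq
        have : (⟨p + q, h⟩ : ↥(FreeSpace M base)) = ⟨p, hp'⟩ + ⟨q, hq'⟩ := Subtype.ext rfl
        rw [this, map_add, map_add, ihp hp', ihq hq']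
      · intro c p hp ihp h
        have hp' : p ∈ FreeSpace M base :=
          Submodule.le_topologicalClosure _ hp
        have : (⟨c • p, h⟩ : ↥(FreeSpace M base)) = c • ⟨p, hp'⟩ := Subtype.ext rfl
        rw [this, map_smul, map_smul, ihp hp']
    have hdense : μ ∈ closure {x : ↥(FreeSpace M base) |
        (x : StrongDual ℝ (Lip0 M base)) ∈ Submodule.span ℝ (Set.range (deltaF M base))} := by
      rw [closure_subtype]
      have himg : (Subtype.val '' {x : ↥(FreeSpace M base) |
          (x : StrongDual ℝ (Lip0 M base)) ∈ Submodule.span ℝ (Set.range (deltaF M base))}) =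
          (Submodule.span ℝ (Set.range (deltaF M base)) : Set (StrongDual ℝ (Lip0 M base))) := by
        ext z
        constructor
        · rintro ⟨w, hw, rfl⟩; exact hw
        · intro hz
          exact ⟨⟨z, Submodule.le_topologicalClosure _ hz⟩, hz, rfl⟩
      rw [himg]
      have hm2 : (μ : StrongDual ℝ (Lip0 M base)) ∈
          (Submodule.span ℝ (Set.range (deltaF M base))).topologicalClosure := μ.2
      rw [← Submodule.topologicalClosure_coe]
      exact hm2
    have hsub : {x : ↥(FreeSpace M base) |
        (x : StrongDual ℝ (Lip0 M base)) ∈ Submodule.span ℝ (Set.range (deltaF M base))} ⊆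
        {x : ↥(FreeSpace M base) | φ x = ψ x} := by
      intro x hx
      have := hspan x hx x.2
      simpa using this
    exact hclosed.closure_subset ((closure_mono hsub) hdense) 
  -- Contradiction
  have hfinal : φ ν ≤ u := by
    rw [hagree ν, hψ_apply]
    calc (ν : StrongDual ℝ (Lip0 M base)) f ≤ ‖(ν : StrongDual ℝ (Lip0 M base)) f‖ := le_abs_self _
      _ ≤ ‖(ν : StrongDual ℝ (Lip0 M base))‖ * ‖f‖ := ContinuousLinearMap.le_opNorm _ _
      _ ≤ 1 * u := by
          refine mul_le_mul ?_ hfnorm (norm_nonneg _) zero_le_one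
          exact hν
      _ = u := one_mul _
  linarith

/-- Approximation with controlled norm. -/
lemma approx_lemma (ν : ↥(FreeSpace M base)) {ε : ℝ} (hε : 0 < ε) :
    ∃ a, ‖a‖ ≤ ‖ν‖ ∧ ‖ν - Qmap base a‖ < ε := by
  rcases eq_or_ne ν 0 with rfl | hν0
  · exact ⟨0, by simp, by simpa using hε⟩
  · have hν : (0:ℝ) < ‖ν‖ := lt_of_le_of_ne (norm_nonneg _)
        (fun h => hν0 (Subtype.ext (norm_eq_zero.1 (by exact h.symm))))
    have h1 : ‖(‖ν‖⁻¹ • ν)‖ ≤ 1 := by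
      have h := norm_smul (‖ν‖⁻¹) ν
      rw [h, norm_inv, norm_norm, inv_mul_cancel₀ hν.ne']
    have hmem := dense_image_ball base (‖ν‖⁻¹ • ν) h1
    rw [Metric.mem_closure_iff] at hmem
    obtain ⟨w, hw, hwd⟩ := hmem (ε / ‖ν‖) (div_pos hε hν)
    obtain ⟨b, hb, rfl⟩ := hw
    refine ⟨‖ν‖ • b, ?_, ?_⟩
    · rw [norm_smul, norm_norm]
      calc ‖ν‖ * ‖b‖ ≤ ‖ν‖ * 1 :=
          mul_le_mul_of_nonneg_left (by simpa [Metric.mem_closedBall] using hb) hν.le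
        _ = ‖ν‖ := mul_one _
    · have : ν - Qmap base (‖ν‖ • b) = ‖ν‖ • (‖ν‖⁻¹ • ν - Qmap base b) := by
        rw [smul_sub, map_smul, smul_smul, mul_inv_cancel₀ hν.ne', one_smul]
      have hns : ‖ν - Qmap base (‖ν‖ • b)‖ = ‖ν‖ * ‖(‖ν‖⁻¹ • ν - Qmap base b)‖ := by
        rw [this]
        have h := norm_smul (‖ν‖) (‖ν‖⁻¹ • ν - Qmap base b)
        rw [h, norm_norm]
      rw [hns]
      rw [dist_eq_norm] at hwd
      calc ‖ν‖ * ‖‖ν‖⁻¹ • ν - Qmap base b‖ < ‖ν‖ * (ε / ‖ν‖) :=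
          mul_lt_mul_of_pos_left hwd hν
        _ = ε := by rw [mul_comm, div_mul_cancel₀ ε hν.ne']

set_option maxHeartbeats 1600000 in
/-- Every point of the open unit ball is hit with a preimage in the open unit ball. -/
lemma Qmap_surj_ball (μ : ↥(FreeSpace M base)) (hμ : ‖μ‖ < 1) :
    ∃ a, ‖a‖ < 1 ∧ Qmap base a = μ := by
  set c : ℝ := (1 - ‖μ‖) / 2 with hc
  have hc0 : 0 < c := by rw [hc]; linarith
  -- recursively build the sequence of remainders
  have hstep : ∀ (ν : ↥(FreeSpace M base)) (ε : ℝ), 0 < ε →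
      ∃ a, ‖a‖ ≤ ‖ν‖ ∧ ‖ν - Qmap base a‖ < ε := fun ν ε hε => approx_lemma base ν hε
  choose g hg1 hg2 using hstep
  set ε : ℕ → ℝ := fun n => c / 2 ^ (n + 1) with hεdef
  have hεpos : ∀ n, 0 < ε n := fun n => by positivity
  -- the sequence of remainders
  let ν : ℕ → ↥(FreeSpace M base) := fun n =>
    Nat.rec μ (fun n νn => νn - Qmap base (g νn (ε n) (hεpos n))) n
  have hν0 : ν 0 = μ := rfl
  have hνsucc : ∀ n, ν (n + 1) = ν n - Qmap base (g (ν n) (ε n) (hεpos n)) := fun n => rfl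
  set a : ℕ → lp (fun _ : PairIdx M => ℝ) 1 := fun n => g (ν n) (ε n) (hεpos n) with ha
  have hνlt : ∀ n, ‖ν (n + 1)‖ < ε n := fun n => hg2 (ν n) (ε n) (hεpos n)
  have hanorm : ∀ n, ‖a n‖ ≤ ‖ν n‖ := fun n => hg1 (ν n) (ε n) (hεpos n)
  set B : ℕ → ℝ := fun n => if n = 0 then ‖μ‖ else c / 2 ^ n with hBdef
  have hbound : ∀ n, ‖a n‖ ≤ B n := by
    intro n
    cases n with
    | zero =>
      have h0 : ‖a 0‖ ≤ ‖μ‖ := by have := hanorm 0; rwa [hν0] at this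
      simpa [hBdef] using h0
    | succ m =>
      have := le_trans (hanorm (m + 1)) (hνlt m).le
      simpa [hBdef, hεdef] using this
  have hgeo2 : Summable (fun n : ℕ => c / 2 ^ n) := by
    simpa [div_eq_mul_inv, ← inv_pow] using (summable_geometric_two).mul_left c
  have hfin : Summable (fun n : ℕ => if n = 0 then ‖μ‖ else (0:ℝ)) := by
    refine (summable_of_ne_finset_zero (s := {0}) ?_)
    intro n hn
    simp at hn
    simp [hn]
  have hBsum : Summable B := by
    refine Summable.of_nonneg_of_le (fun n => ?_) (fun n => ?_) (hfin.add hgeo2)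
    · by_cases h : n = 0
      · simp only [hBdef, if_pos h]
        positivity
      · simp only [hBdef, if_neg h]
        positivity
    · by_cases h : n = 0
      · simp only [hBdef, Pi.add_apply, if_pos h]
        have : (0:ℝ) ≤ c / 2 ^ n := by positivity
        linarith
      · simp only [hBdef, Pi.add_apply, if_neg h]
        simp
  have htsumB : ∑' n, B n = ‖μ‖ + c := by
    rw [Summable.tsum_eq_zero_add hBsum]
    have hB0 : B 0 = ‖μ‖ := if_pos rfl
    have hBs : ∀ n : ℕ, B (n + 1) = (c / 2) * (1 / 2 : ℝ) ^ n := by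
      intro n
      simp only [hBdef, Nat.succ_ne_zero, if_false]
      rw [pow_succ, div_pow, one_pow]
      ring
    rw [hB0]
    congr 1
    rw [tsum_congr hBs, tsum_mul_left,
      tsum_geometric_of_lt_one (by norm_num) (by norm_num : (1/2:ℝ) < 1)]
    norm_num
  -- summability of a
  have hsummable : Summable a :=
    Summable.of_norm (Summable.of_nonneg_of_le (fun n => norm_nonneg _) hbound hBsum)
  set A : lp (fun _ : PairIdx M => ℝ) 1 := ∑' n, a n with hA
  have hQA : Qmap base A = μ := by
    have hQsum : Summable (fun n => Qmap base (a n)) := hsummable.map _ (Qmap base).continuous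
    have htel : ∀ N : ℕ, ∑ n ∈ Finset.range N, Qmap base (a n) = μ - ν N := by
      intro N
      induction N with
      | zero => simp [hν0]
      | succ m ih =>
        rw [Finset.sum_range_succ, ih, hνsucc m]
        abel
    have hgeo : Filter.Tendsto (fun n : ℕ => c / 2 ^ n) Filter.atTop (nhds 0) := by
      have := (tendsto_pow_atTop_nhds_zero_of_lt_one (r := (2:ℝ)⁻¹)
        (by norm_num) (by norm_num)).const_mul c
      simpa [div_eq_mul_inv, ← inv_pow] using this
    have hνlim : Filter.Tendsto ν Filter.atTop (nhds 0) := by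
      rw [tendsto_zero_iff_norm_tendsto_zero]
      refine squeeze_zero' (Filter.Eventually.of_forall fun n => norm_nonneg _) ?_ hgeo
      filter_upwards [Filter.eventually_ge_atTop 1] with n hn
      obtain ⟨m, rfl⟩ := Nat.exists_eq_add_of_le hn
      rw [Nat.add_comm 1 m]
      have := (hνlt m).le
      simpa [hεdef] using this
    have hQν : Filter.Tendsto (fun N => ∑ n ∈ Finset.range N, Qmap base (a n))
        Filter.atTop (nhds μ) := by
      simp_rw [htel]
      have h := hνlim.const_sub μ
      rw [sub_zero] at h
      exact h
    have := hQsum.hasSum.tendsto_sum_nat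
    have hsum_eq : ∑' n, Qmap base (a n) = μ := tendsto_nhds_unique this hQν
    rw [hA, ← hsum_eq]
    exact ((Qmap base).map_tsum hsummable)
  have hAnorm : ‖A‖ < 1 := by
    have hnormsum : Summable (fun n => ‖a n‖) :=
      Summable.of_nonneg_of_le (fun n => norm_nonneg _) hbound hBsum
    have h1 : ‖A‖ ≤ ∑' n, ‖a n‖ := norm_tsum_le_tsum_norm hnormsum
    have h2 : ∑' n, ‖a n‖ ≤ ∑' n, B n := Summable.tsum_le_tsum hbound hnormsum hBsum
    rw [htsumB] at h2
    have : ‖μ‖ + c < 1 := by rw [hc]; linarith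
    linarith
  exact ⟨A, hAnorm, hQA⟩

end QConstruction

open scoped Classical in
/-- Lemma 1 (folklore): the canonical map `Q : ℓ¹(M̃) → F(M)` sending `e_{(x,y)}` to the
molecule `m_{xy}` has norm one and maps the open unit ball onto the open unit ball. -/
theorem stmt_5 {M : Type*} [MetricSpace M] (base : M) (hM : ∃ x y : M, x ≠ y) :
    ∃ Q : lp (fun _ : {pq : M × M // pq.1 ≠ pq.2} => ℝ) 1 →L[ℝ] ↥(FreeSpace M base),
      (∀ pq : {pq : M × M // pq.1 ≠ pq.2},
        ((Q (lp.single 1 pq 1) : StrongDual ℝ (Lip0 M base))) = molecule base pq.1.1 pq.1.2) ∧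
      ‖Q‖ = 1 ∧ Q '' Metric.ball 0 1 = Metric.ball 0 1 := by
  refine ⟨Qmap base, fun pq => ?_, ?_, ?_⟩
  · rw [Qmap_single base pq]
    rfl
  · refine le_antisymm (ContinuousLinearMap.opNorm_le_bound _ zero_le_one fun a => by
      simpa using Qmap_norm_le base a) ?_
    obtain ⟨x, y, hxy⟩ := hM
    have h := (Qmap base).le_opNorm (lp.single 1 (⟨(x, y), hxy⟩ : PairIdx M) 1)
    rw [Qmap_single, lp_single_norm, mul_one] at h
    have hmol : ‖mol base x y‖ = 1 := by
      show ‖molecule base x y‖ = 1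
      exact molecule_norm_eq_one hxy
    rw [hmol] at h
    exact h
  · ext μ
    simp only [Set.mem_image, Metric.mem_ball, dist_zero_right]
    constructor
    · rintro ⟨a, ha, rfl⟩
      exact lt_of_le_of_lt (Qmap_norm_le base a) ha
    · intro hμ
      obtain ⟨a, ha, hQa⟩ := Qmap_surj_ball base μ hμ
      exact ⟨a, ha, hQa⟩
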